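/- arXiv:2111.13658 — 5 statements merged into one kernel-verified Lean document; each statement's English description precedes it below -/
import Mathlib

section
/- Let p be a prime, n ∈ ℕ, and let ι be a finite type with Fintype.card ι ≥ (p − 1)·n + 1. Then for every family v : ι → (Fin n → ZMod p), we have ∏_{i ∈ ι} (1 − g^{v i}) = 0 in the group ring F_p[F_p^n]. -/
open AddMonoidAlgebra

section aux
variable (p n : ℕ) [Fact p.Prime]

local notation "A" => AddMonoidAlgebra (ZMod p) (Fin n → ZMod p)

noncomputable def genI : Ideal A :=
  Ideal.span (Set.range fun j : Fin n =>
    (1 : A) - AddMonoidAlgebra.single (Pi.single j 1) 1)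

lemma charA : CharP A p :=
  charP_of_injective_algebraMap (R := ZMod p)
    (fun a b h => by
      have h2 : (a • (1 : A)) = b • (1 : A) := by
        simpa [Algebra.algebraMap_eq_smul_one] using h
      simpa [AddMonoidAlgebra.one_def, Finsupp.smul_single, Finsupp.single_apply]
        using congrArg (fun f : A => f.coeff (0 : Fin n → ZMod p)) h2) p

lemma single_pow_p (v : Fin n → ZMod p) :
    (AddMonoidAlgebra.single v 1 : A) ^ p = 1 := by
  rw [AddMonoidAlgebra.single_pow, one_pow]
  have : p • v = 0 := by
    funext j
    simp [nsmul_eq_mul, ZMod.natCast_self]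
  rw [this, ← AddMonoidAlgebra.one_def]

lemma gen_pow_p (j : Fin n) :
    ((1 : A) - AddMonoidAlgebra.single (Pi.single j 1) 1) ^ p = 0 := by
  have := charA p n
  rw [sub_pow_char, one_pow, single_pow_p, sub_self]

lemma mem_genI (v : Fin n → ZMod p) :
    (1 : A) - AddMonoidAlgebra.single v 1 ∈ genI p n := by
  let M : AddSubmonoid (Fin n → ZMod p) :=
    { carrier := {w | (1 : A) - AddMonoidAlgebra.single w 1 ∈ genI p n}
      zero_mem' := by simp [← AddMonoidAlgebra.one_def]
      add_mem' := by
        intro a b ha hb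
        have key : (1 : A) - AddMonoidAlgebra.single (a + b) 1 =
            ((1 : A) - AddMonoidAlgebra.single a 1) +
            AddMonoidAlgebra.single a 1 * ((1 : A) - AddMonoidAlgebra.single b 1) := by
          rw [mul_sub, mul_one, AddMonoidAlgebra.single_mul_single, mul_one]
          ring
        show (1 : A) - AddMonoidAlgebra.single (a + b) 1 ∈ genI p n
        rw [key]
        exact add_mem ha (Ideal.mul_mem_left _ _ hb) }
  have hsingle : ∀ j : Fin n, Pi.single j (1 : ZMod p) ∈ M :=
    fun j => Ideal.subset_span ⟨j, rfl⟩
  have hM : ∀ w, w ∈ M := by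
    intro w
    have : w = ∑ j : Fin n, Pi.single j (w j) := (Finset.univ_sum_single w).symm
    rw [this]
    refine AddSubmonoid.sum_mem _ fun j _ => ?_
    have : Pi.single j (w j) = (w j).val • (Pi.single j (1 : ZMod p) : Fin n → ZMod p) := by
      funext i
      simp [Pi.single_apply, ZMod.natCast_val, ZMod.cast_id]
    rw [this]
    exact AddSubmonoid.nsmul_mem _ (hsingle j) _
  exact hM v

end aux

lemma prod_mem_pow' {R : Type*} [CommRing R] (I : Ideal R) {ι : Type*} (s : Finset ι)
    (a : ι → R) (h : ∀ i ∈ s, a i ∈ I) : ∏ i ∈ s, a i ∈ I ^ s.card := by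
  induction s using Finset.cons_induction with
  | empty => simp
  | cons i s hi ih =>
    rw [Finset.prod_cons, Finset.card_cons, pow_succ']
    exact Ideal.mul_mem_mul (h i (by simp)) (ih fun j hj => h j (by simp [hj]))

section aux2
variable (p n : ℕ) [Fact p.Prime]

local notation "A" => AddMonoidAlgebra (ZMod p) (Fin n → ZMod p)

lemma genI_pow_eq_bot : genI p n ^ ((p - 1) * n + 1) = ⊥ := by
  set N := (p - 1) * n + 1 with hN
  set gen : Fin n → A := fun j =>
    (1 : A) - AddMonoidAlgebra.single (Pi.single j 1) 1 with hgen
  rw [genI, Ideal.span, Submodule.span_pow, eq_bot_iff, Submodule.span_le]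
  rintro a ha
  rw [Set.mem_pow] at ha
  obtain ⟨f, hf⟩ := ha
  simp only [SetLike.mem_coe, Ideal.mem_bot]
  rw [List.prod_ofFn] at hf
  have hj : ∀ i, ∃ j : Fin n, gen j = (f i : A) := fun i => (f i).2
  choose j hj using hj
  obtain ⟨j₀, hj₀⟩ : ∃ y : Fin n, p - 1 < (Finset.univ.filter fun x => j x = y).card := by
    apply Fintype.exists_lt_card_fiber_of_mul_lt_card
    simp only [Fintype.card_fin]
    rw [mul_comm]; omega
  have hsplit := Finset.prod_filter_mul_prod_filter_not Finset.univ
    (fun i => j i = j₀) (fun i => (f i : A))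
  have h1 : ∏ i ∈ Finset.univ.filter fun x => j x = j₀, (f i : A)
      = gen j₀ ^ ((Finset.univ.filter fun x => j x = j₀).card) := by
    rw [← Finset.prod_const]
    refine Finset.prod_congr rfl fun i hi => ?_
    simp only [Finset.mem_filter] at hi
    rw [← hj i, hi.2]
  have hple : p ≤ (Finset.univ.filter fun x => j x = j₀).card := by
    have := (Fact.out : p.Prime).two_le; omega
  have h0 : gen j₀ ^ ((Finset.univ.filter fun x => j x = j₀).card) = 0 := by
    rw [← Nat.add_sub_cancel' hple, pow_add, gen_pow_p, zero_mul]
  rw [← hf, ← hsplit, h1, h0, zero_mul]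

end aux2

theorem stmt_8 (p : ℕ) (hp : p.Prime) (n : ℕ) (ι : Type) [Fintype ι]
    (hι : (p - 1) * n + 1 ≤ Fintype.card ι) (v : ι → (Fin n → ZMod p)) :
    ∏ i : ι, ((1 : AddMonoidAlgebra (ZMod p) (Fin n → ZMod p)) -
      AddMonoidAlgebra.single (v i) 1) = 0 := by
  haveI : Fact p.Prime := ⟨hp⟩
  have hmem : ∏ i : ι, ((1 : AddMonoidAlgebra (ZMod p) (Fin n → ZMod p)) -
      AddMonoidAlgebra.single (v i) 1) ∈ genI p n ^ Fintype.card ι := by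
    simpa [Finset.card_univ] using
      prod_mem_pow' (genI p n) Finset.univ _ (fun i _ => mem_genI p n (v i))
  have := Ideal.pow_le_pow_right hι hmem
  rwa [genI_pow_eq_bot, Ideal.mem_bot] at this
end

section
/- Let p be a prime, n ∈ ℕ, let r be an integer with 1 ≤ r ≤ p − 1, and let ι be a finite type with r · Fintype.card ι ≥ (p − 1)·n + 1. Then for every family v : ι → (Fin n → ZMod p), we have ∏_{i ∈ ι} (1 − g^{v i})^r = 0 in the group ring F_p[F_p^n]. -/
open Finset

theorem stmt_9 (p : ℕ) (hp : p.Prime) (n : ℕ) (r : ℕ) (hr1 : 1 ≤ r) (hrp : r ≤ p - 1)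
    (ι : Type) [Fintype ι] (hι : (p - 1) * n + 1 ≤ r * Fintype.card ι)
    (v : ι → (Fin n → ZMod p)) :
    ∏ i : ι, ((1 : AddMonoidAlgebra (ZMod p) (Fin n → ZMod p)) -
      AddMonoidAlgebra.single (v i) 1) ^ r = 0 := by
  classical
  haveI : Fact p.Prime := ⟨hp⟩
  set A := AddMonoidAlgebra (ZMod p) (Fin n → ZMod p) with hA
  haveI : CharP A p := by
    refine charP_of_injective_algebraMap (R := ZMod p) (A := A) ?_ p
    intro a b h
    simpa [AddMonoidAlgebra.coe_algebraMap] using h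
  set x : Fin n → A := fun i => AddMonoidAlgebra.single (Pi.single i 1) 1 - 1 with hxdef
  -- each generator is nilpotent of order p
  have hxp : ∀ i, x i ^ p = 0 := by
    intro i
    have h1 : (AddMonoidAlgebra.single (Pi.single i 1 : Fin n → ZMod p) (1 : ZMod p)) ^ p
        = AddMonoidAlgebra.single (p • Pi.single i (1 : ZMod p)) 1 := by
      rw [AddMonoidAlgebra.single_pow, one_pow]
    have h2 : p • (Pi.single i 1 : Fin n → ZMod p) = 0 := by
      funext j
      simp [ZMod.natCast_self]
    show (AddMonoidAlgebra.single (Pi.single i 1 : Fin n → ZMod p) 1 - 1) ^ p = 0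
    rw [sub_pow_char, h1, h2, one_pow, AddMonoidAlgebra.one_def, sub_self]
  set J : Ideal A := Ideal.span (Set.range x) with hJ
  have hxJ : ∀ i, x i ∈ J := fun i => Ideal.subset_span ⟨i, rfl⟩
  -- every group element maps to 1 in A/J
  have hmk : ∀ w : Fin n → ZMod p,
      Ideal.Quotient.mk J (AddMonoidAlgebra.single w 1) = 1 := by
    intro w
    have hw : AddMonoidAlgebra.single w (1 : ZMod p)
        = ∏ i : Fin n, AddMonoidAlgebra.single (Pi.single i (w i)) 1 := by
      rw [AddMonoidAlgebra.prod_single, Finset.prod_const_one, Finset.univ_sum_single]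
    rw [hw, map_prod]
    apply Finset.prod_eq_one
    intro i _
    have h1 : (Pi.single i (w i) : Fin n → ZMod p)
        = (w i).val • (Pi.single i 1 : Fin n → ZMod p) := by
      funext j
      by_cases h : j = i
      · subst h; simp [ZMod.natCast_val]
      · simp [Pi.single_apply, h]
    have h2 : AddMonoidAlgebra.single (Pi.single i (w i) : Fin n → ZMod p) (1 : ZMod p)
        = (AddMonoidAlgebra.single (Pi.single i 1 : Fin n → ZMod p) (1 : ZMod p)) ^ (w i).val := by
      rw [AddMonoidAlgebra.single_pow, one_pow, h1]
    have h3 : Ideal.Quotient.mk J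
        (AddMonoidAlgebra.single (Pi.single i 1 : Fin n → ZMod p) (1 : ZMod p)) = 1 := by
      have := (Ideal.Quotient.eq_zero_iff_mem).2 (hxJ i)
      rw [hxdef] at this
      simp only [map_sub, map_one, sub_eq_zero] at this
      exact this
    rw [h2, map_pow, h3, one_pow]
  have hmem : ∀ w : Fin n → ZMod p,
      (1 : A) - AddMonoidAlgebra.single w 1 ∈ J := by
    intro w
    rw [← Ideal.Quotient.eq_zero_iff_mem, map_sub, map_one, hmk, sub_self]
  -- the product lies in J ^ (r * card ι)
  have hprod : (∏ i : ι, ((1 : A) - AddMonoidAlgebra.single (v i) 1) ^ r)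
      ∈ J ^ (r * Fintype.card ι) := by
    have : (∏ i : ι, ((1 : A) - AddMonoidAlgebra.single (v i) 1) ^ r)
        ∈ ∏ _i : ι, J ^ r :=
      Ideal.prod_mem_prod (fun i _ => Ideal.pow_mem_pow (hmem (v i)) r)
    rw [Finset.prod_const, ← pow_mul] at this
    exact this
  set N : ℕ := (p - 1) * n + 1 with hN
  have hle : J ^ (r * Fintype.card ι) ≤ J ^ N := Ideal.pow_le_pow_right hι
  -- J ^ N = 0
  have hJN : J ^ N = ⊥ := by
    rw [hJ, Ideal.span, Submodule.span_pow]
    rw [← le_bot_iff]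
    rw [Submodule.span_le]
    intro a ha
    rw [Set.mem_pow] at ha
    obtain ⟨f, hf⟩ := ha
    choose g hg using fun i => (f i).2
    have ha' : a = ∏ i : Fin N, x (g i) := by
      rw [← hf, List.prod_ofFn]
      exact Finset.prod_congr rfl fun i _ => by rw [hg i]
    obtain ⟨j, hj⟩ : ∃ j : Fin n, p - 1 < (Finset.univ.filter fun i => g i = j).card := by
      apply Fintype.exists_lt_card_fiber_of_mul_lt_card
      simp only [Fintype.card_fin]
      rw [mul_comm]
      omega
    have hpj : p ≤ (Finset.univ.filter fun i => g i = j).card := by omega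
    have : a = 0 := by
      rw [ha', ← Finset.prod_filter_mul_prod_filter_not Finset.univ (fun i => g i = j)]
      have h1 : (∏ i ∈ Finset.univ.filter fun i => g i = j, x (g i)) = 0 := by
        rw [Finset.prod_congr rfl (fun i hi => by
          rw [(Finset.mem_filter.1 hi).2]), Finset.prod_const]
        rw [← Nat.sub_add_cancel hpj, pow_add, hxp j, mul_zero]
      rw [h1, zero_mul]
    simpa using this
  have := hle hprod
  rw [hJN] at this
  simpa using this
end

section
/- Let p be a prime, let r be an integer with 1 ≤ r ≤ p − 1, let ι be a finite type, and let v : ι → (Fin n → ZMod p) be an (r, F_p)-irredundant family. Then for every b : ι → ZMod p with b i ≠ 0 for all i, and every w ∈ ι, there exists ε : ι → ℤ such that 1 ≤ ε w ≤ r, |ε i| ≤ r for every i ≠ w, and ((ε w : ZMod p) · b w) • v w = Σ_{i ∈ ι, i ≠ w} ((ε i : ZMod p) · b i) • v i. -/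
/-- The family `v` is `(r, F_p)`-vanishing: `∏ i, (1 - g^{v i})^r = 0` in the
group ring `F_p[F_p^n]`. -/
def FpVanishing (p n r : ℕ) {ι : Type} [Fintype ι] (v : ι → (Fin n → ZMod p)) : Prop :=
  ∏ i : ι, ((1 : AddMonoidAlgebra (ZMod p) (Fin n → ZMod p)) -
    AddMonoidAlgebra.single (v i) 1) ^ r = 0

/-- The family `v` is `(r, F_p)`-irredundant: it is `(r, F_p)`-vanishing, but the
corresponding product over any proper subset of the index set is nonzero. -/
def FpIrredundant (p n r : ℕ) {ι : Type} [Fintype ι] (v : ι → (Fin n → ZMod p)) : Prop :=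
  FpVanishing p n r v ∧
    ∀ S : Finset ι, S ≠ Finset.univ →
      ∏ i ∈ S, ((1 : AddMonoidAlgebra (ZMod p) (Fin n → ZMod p)) -
        AddMonoidAlgebra.single (v i) 1) ^ r ≠ 0

section Aux

variable {p n : ℕ} [hp : Fact p.Prime]

local notation "R" => AddMonoidAlgebra (ZMod p) (Fin n → ZMod p)
local notation "G" => Fin n → ZMod p

theorem aux_charP : CharP (AddMonoidAlgebra (ZMod p) (Fin n → ZMod p)) p :=
  charP_of_injective_ringHom
    (f := (AddMonoidAlgebra.singleZeroRingHom :
      ZMod p →+* AddMonoidAlgebra (ZMod p) (Fin n → ZMod p)))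
    (fun _ _ hxy => AddMonoidAlgebra.single_right_injective (m := (0 : Fin n → ZMod p)) hxy) p

theorem aux_pow_p (a : G) :
    (AddMonoidAlgebra.single a 1 : R) ^ p = 1 := by
  rw [AddMonoidAlgebra.single_pow, one_pow]
  have h : (p • a : G) = 0 := by
    funext i
    simp [nsmul_eq_mul, ZMod.natCast_self]
  rw [h]
  rfl

theorem aux_nilpotent (a : G) :
    IsNilpotent ((AddMonoidAlgebra.single a 1 : R) - 1) := by
  haveI := aux_charP (p := p) (n := n)
  refine ⟨p, ?_⟩
  rw [sub_pow_char, aux_pow_p, one_pow, sub_self]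

/-- Scaling lemma: `1 - g^{c • a}` is a unit multiple of `1 - g^a` when `c ≠ 0`. -/
theorem aux_scale (a : G) (c : ZMod p) (hc : c ≠ 0) :
    ∃ u : R, IsUnit u ∧
      (1 - AddMonoidAlgebra.single (c • a) 1 : R) =
        u * (1 - AddMonoidAlgebra.single a 1) := by
  set h : R := AddMonoidAlgebra.single a 1 with hh
  set m : ℕ := c.val with hm
  have hmc : ((m : ℕ) : ZMod p) = c := by
    simp [hm, ZMod.natCast_val, ZMod.cast_id]
  have hpow : h ^ m = AddMonoidAlgebra.single (c • a) 1 := by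
    rw [hh, AddMonoidAlgebra.single_pow, one_pow]
    congr 1
    funext i
    simp [← hmc, nsmul_eq_mul]
  refine ⟨∑ j ∈ Finset.range m, h ^ j, ?_, ?_⟩
  · have hnil : IsNilpotent (∑ j ∈ Finset.range m, (h ^ j - 1)) := by
      apply isNilpotent_sum
      intro j _
      have hgeom : h ^ j - 1 = (∑ l ∈ Finset.range j, h ^ l) * (h - 1) := (geom_sum_mul h j).symm
      rw [hgeom]
      exact (Commute.all _ _).isNilpotent_mul_left (aux_nilpotent a)
    have hunit : IsUnit ((m : R)) := by
      have hcast : ((m : R)) = algebraMap (ZMod p) R ((m : ZMod p)) := by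
        rw [map_natCast]
      rw [hcast]
      exact IsUnit.map _ (isUnit_iff_ne_zero.2 (by rw [hmc]; exact hc))
    have hsum : (∑ j ∈ Finset.range m, h ^ j) =
        (∑ j ∈ Finset.range m, (h ^ j - 1)) + (m : R) := by
      rw [Finset.sum_sub_distrib]
      simp
    rw [hsum, add_comm]
    exact hnil.isUnit_add_left_of_commute hunit (Commute.all _ _)
  · rw [← hpow]
    calc (1 : R) - h ^ m = -((∑ j ∈ Finset.range m, h ^ j) * (h - 1)) := by
          rw [geom_sum_mul]; ring
    _ = (∑ j ∈ Finset.range m, h ^ j) * (1 - h) := by ring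

/-- Support of `(1 - g^a)^r` is contained in multiples of `a` up to `r`. -/
theorem aux_support_pow (a : G) (r : ℕ) (x : G)
    (hx : x ∈ ((1 - AddMonoidAlgebra.single a 1 : R) ^ r).coeff.support) :
    ∃ j : ℕ, j ≤ r ∧ x = j • a := by
  classical
  induction r generalizing x with
  | zero =>
    rw [pow_zero] at hx
    have h1 : (1 : R) = AddMonoidAlgebra.single (0 : G) 1 := rfl
    rw [h1] at hx
    have hx' := Finsupp.support_single_subset hx
    simp only [Finset.mem_singleton] at hx'
    exact ⟨0, le_rfl, by simp [hx']⟩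
  | succ r ih =>
    rw [pow_succ'] at hx
    have hmem := AddMonoidAlgebra.support_coeff_mul_subset _ _ hx
    rw [Finset.mem_add] at hmem
    obtain ⟨y, hy, z, hz, hyz⟩ := hmem
    obtain ⟨j, hj, hjz⟩ := ih z hz
    have hy' : y ∈ ({(0 : G), a} : Finset G) := by
      have h1 : (1 : R) = AddMonoidAlgebra.single (0 : G) 1 := rfl
      have hsub : ((1 - AddMonoidAlgebra.single a 1 : R)).coeff.support ⊆
          ({(0 : G)} : Finset G) ∪ {a} := by
        intro t ht
        have ht' := Finsupp.support_sub (f := (1 : R).coeff) (g := (AddMonoidAlgebra.single a 1 : R).coeff) ht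
        rw [Finset.mem_union] at ht' ⊢
        rcases ht' with h | h
        · left; rw [h1] at h; exact Finsupp.support_single_subset h
        · right; exact Finsupp.support_single_subset h
      have := hsub hy
      simpa using this
    simp only [Finset.mem_insert, Finset.mem_singleton] at hy'
    rcases hy' with rfl | rfl
    · exact ⟨j, le_trans hj (Nat.le_succ r), by rw [← hyz, hjz, zero_add]⟩
    · exact ⟨j + 1, Nat.succ_le_succ hj, by rw [← hyz, hjz, succ_nsmul, add_comm]⟩

/-- Support of a product of `(1 - g^{a i})^r` over a finset. -/
theorem aux_support_prod {ι : Type} [DecidableEq ι] (a : ι → G) (r : ℕ) (S : Finset ι) (x : G)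
    (hx : x ∈ (∏ i ∈ S, (1 - AddMonoidAlgebra.single (a i) 1 : R) ^ r).coeff.support) :
    ∃ m : ι → ℕ, (∀ i, m i ≤ r) ∧ x = ∑ i ∈ S, (m i) • a i := by
  classical
  induction S using Finset.induction_on generalizing x with
  | empty =>
    rw [Finset.prod_empty] at hx
    have h1 : (1 : R) = AddMonoidAlgebra.single (0 : G) 1 := rfl
    rw [h1] at hx
    have hx' := Finsupp.support_single_subset hx
    simp only [Finset.mem_singleton] at hx'
    exact ⟨fun _ => 0, fun _ => Nat.zero_le r, by simp [hx']⟩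
  | @insert i S' hi ih =>
    rw [Finset.prod_insert hi] at hx
    have hmem := AddMonoidAlgebra.support_coeff_mul_subset _ _ hx
    rw [Finset.mem_add] at hmem
    obtain ⟨y, hy, z, hz, hyz⟩ := hmem
    obtain ⟨j, hj, hjy⟩ := aux_support_pow (a i) r y hy
    obtain ⟨m, hm, hmz⟩ := ih z hz
    refine ⟨fun t => if t = i then j else m t,
      fun t => by dsimp only; split <;> [exact hj; exact hm t], ?_⟩
    dsimp only
    rw [Finset.sum_insert hi, if_pos rfl, ← hyz, hjy, hmz]
    congr 1
    exact Finset.sum_congr rfl fun t ht => by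
      rw [if_neg (fun h : t = i => hi (h ▸ ht))]

end Aux

theorem stmt_10 (p : ℕ) (hp : p.Prime) (n : ℕ) (r : ℕ) (hr1 : 1 ≤ r) (hrp : r ≤ p - 1)
    (ι : Type) [Fintype ι] [DecidableEq ι] (v : ι → (Fin n → ZMod p)) (hv : FpIrredundant p n r v)
    (b : ι → ZMod p) (hb : ∀ i, b i ≠ 0) (w : ι) :
    ∃ ε : ι → ℤ, 1 ≤ ε w ∧ ε w ≤ (r : ℤ) ∧ (∀ i, i ≠ w → |ε i| ≤ (r : ℤ)) ∧
      (((ε w : ℤ) : ZMod p) * b w) • v w =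
        ∑ i ∈ Finset.univ.erase w, (((ε i : ℤ) : ZMod p) * b i) • v i := by
  classical
  haveI : Fact p.Prime := ⟨hp⟩
  set v' : ι → (Fin n → ZMod p) := fun i => b i • v i with hv'
  choose u hu hueq using fun i => aux_scale (p := p) (n := n) (v i) (b i) (hb i)
  have key : ∀ S : Finset ι,
      ∏ i ∈ S, (1 - AddMonoidAlgebra.single (v' i) 1 :
          AddMonoidAlgebra (ZMod p) (Fin n → ZMod p)) ^ r =
        (∏ i ∈ S, (u i) ^ r) *
          ∏ i ∈ S, (1 - AddMonoidAlgebra.single (v i) 1) ^ r := by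
    intro S
    rw [← Finset.prod_mul_distrib]
    exact Finset.prod_congr rfl fun i _ => by rw [← mul_pow, ← hueq i]
  set Q : AddMonoidAlgebra (ZMod p) (Fin n → ZMod p) :=
    ∏ i ∈ Finset.univ.erase w, (1 - AddMonoidAlgebra.single (v' i) 1) ^ r with hQ
  have herase : (Finset.univ.erase w : Finset ι) ≠ Finset.univ := fun h =>
    (Finset.notMem_erase w Finset.univ) (h.symm ▸ Finset.mem_univ w)
  have hQne : Q ≠ 0 := by
    intro h0
    apply hv.2 (Finset.univ.erase w) herase
    have hu' : IsUnit (∏ i ∈ Finset.univ.erase w, (u i) ^ r) :=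
      Finset.prod_induction _ IsUnit (fun _ _ => IsUnit.mul) isUnit_one
        fun i _ => (hu i).pow r
    rw [hQ, key] at h0
    exact (hu'.mul_right_eq_zero).1 h0
  have hvan : (1 - AddMonoidAlgebra.single (v' w) 1 :
      AddMonoidAlgebra (ZMod p) (Fin n → ZMod p)) ^ r * Q = 0 := by
    have h1 : ∏ i : ι, (1 - AddMonoidAlgebra.single (v' i) 1 :
        AddMonoidAlgebra (ZMod p) (Fin n → ZMod p)) ^ r = 0 := by
      rw [key Finset.univ, hv.1, mul_zero]
    rw [← Finset.mul_prod_erase Finset.univ _ (Finset.mem_univ w)] at h1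
    exact h1
  -- binomial expansion
  have hexp : (1 - AddMonoidAlgebra.single (v' w) 1 :
      AddMonoidAlgebra (ZMod p) (Fin n → ZMod p)) ^ r =
      ∑ k ∈ Finset.range (r + 1),
        AddMonoidAlgebra.single ((k • v' w : Fin n → ZMod p))
          ((-1 : ZMod p) ^ k * (r.choose k : ZMod p)) := by
    rw [sub_eq_add_neg, add_comm, add_pow]
    refine Finset.sum_congr rfl fun k _ => ?_
    have hneg : (-(AddMonoidAlgebra.single (v' w) 1) :
        AddMonoidAlgebra (ZMod p) (Fin n → ZMod p)) =
        AddMonoidAlgebra.single (v' w) (-1 : ZMod p) := by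
      rw [AddMonoidAlgebra.single_neg]
    rw [hneg, AddMonoidAlgebra.single_pow, one_pow, mul_one,
      AddMonoidAlgebra.natCast_def, AddMonoidAlgebra.single_mul_single, add_zero]
  -- coefficient recurrence
  have hcoeff : ∀ y : Fin n → ZMod p,
      ∑ k ∈ Finset.range (r + 1),
        ((-1 : ZMod p) ^ k * (r.choose k : ZMod p)) * Q.coeff (y - k • v' w) = 0 := by
    intro y
    have h0 : ((1 - AddMonoidAlgebra.single (v' w) 1 :
        AddMonoidAlgebra (ZMod p) (Fin n → ZMod p)) ^ r * Q).coeff y = 0 := by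
      rw [hvan]; rfl
    rw [hexp, Finset.sum_mul, AddMonoidAlgebra.coeff_sum, Finset.sum_apply'] at h0
    rw [← h0]
    refine Finset.sum_congr rfl fun k _ => ?_
    rw [AddMonoidAlgebra.coeff_single_mul_apply, neg_add_eq_sub]
  -- pick a support point
  obtain ⟨x, hx⟩ : ∃ x, Q.coeff x ≠ 0 := by
    by_contra hcon
    push_neg at hcon
    exact hQne (AddMonoidAlgebra.ext (Finsupp.ext hcon))
  have hex : ∃ k : ℕ, 1 ≤ k ∧ k ≤ r ∧ Q.coeff (x - k • v' w) ≠ 0 := by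
    by_contra hcon
    push_neg at hcon
    have h0 := hcoeff x
    rw [Finset.sum_eq_single 0 (fun k hk hk0 => by
        rw [hcon k (Nat.one_le_iff_ne_zero.2 hk0)
          (Nat.lt_succ_iff.1 (Finset.mem_range.1 hk)), mul_zero])
      (fun h => absurd (Finset.mem_range.2 (Nat.succ_pos r)) h)] at h0
    simp only [pow_zero, Nat.choose_zero_right, Nat.cast_one, one_mul, zero_smul,
      sub_zero] at h0
    exact hx h0
  obtain ⟨k, hk1, hkr, hkne⟩ := hex
  -- support membership
  obtain ⟨m, hm, hxm⟩ := aux_support_prod (p := p) (n := n) v' r (Finset.univ.erase w) x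
    (Finsupp.mem_support_iff.2 hx)
  obtain ⟨m', hm', hxm'⟩ := aux_support_prod (p := p) (n := n) v' r (Finset.univ.erase w)
    (x - k • v' w) (Finsupp.mem_support_iff.2 hkne)
  set ε : ι → ℤ := fun i => if i = w then (k : ℤ) else (m i : ℤ) - (m' i : ℤ) with hε
  have hεw : ε w = (k : ℤ) := by simp [hε]
  have hεi : ∀ i, i ≠ w → ε i = (m i : ℤ) - (m' i : ℤ) := by
    intro i hi
    simp only [hε]
    rw [if_neg hi]
  refine ⟨ε, ?_, ?_, ?_, ?_⟩
  · rw [hεw]; exact_mod_cast hk1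
  · rw [hεw]; exact_mod_cast hkr
  · intro i hi
    rw [hεi i hi, abs_le]
    have h1 := hm i
    have h2 := hm' i
    omega
  · have hsum : ∑ i ∈ Finset.univ.erase w, (((ε i : ℤ) : ZMod p) * b i) • v i =
        ∑ i ∈ Finset.univ.erase w, (ε i) • v' i := by
      refine Finset.sum_congr rfl fun i hi => ?_
      rw [mul_smul, Int.cast_smul_eq_zsmul]
    rw [hsum, hεw, mul_smul, Int.cast_smul_eq_zsmul]
    have hr2 : ∑ i ∈ Finset.univ.erase w, (ε i) • v' i = x - (x - k • v' w) := by
      rw [Finset.sum_congr rfl fun i hi => by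
        rw [hεi i (Finset.ne_of_mem_erase hi)]]
      rw [hxm', hxm, ← Finset.sum_sub_distrib]
      refine Finset.sum_congr rfl fun i _ => ?_
      rw [sub_smul, natCast_zsmul, natCast_zsmul]
    rw [hr2, sub_sub_cancel, natCast_zsmul]
end

section
/- Let A be a finite additive abelian group admitting an efficient coset cover, that is, a finite family of additive subgroups H : Fin k → AddSubgroup A and elements x : Fin k → A such that (H i, x i)_{i ∈ Fin k} is an irredundant coset cover of A, ⨅_{i ∈ Fin k} H i = ⊥, and every H i is a maximal proper subgroup of A. Then there exist a prime p and an integer n ≥ 1 such that A is isomorphic as an additive group to Fin n → ZMod p. -/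
/-- The family of cosets `(x i + H i)` covers `A`. -/
def IsCosetCover {A : Type*} [AddCommGroup A] {k : ℕ}
    (H : Fin k → AddSubgroup A) (x : Fin k → A) : Prop :=
  ∀ a : A, ∃ i : Fin k, a - x i ∈ H i

/-- The family of cosets `(x i + H i)` is an irredundant cover of `A`:
it covers `A`, but no proper subfamily does. -/
def IsIrredundantCosetCover {A : Type*} [AddCommGroup A] {k : ℕ}
    (H : Fin k → AddSubgroup A) (x : Fin k → A) : Prop :=
  IsCosetCover H x ∧
    ∀ S : Finset (Fin k), S ≠ Finset.univ → ∃ a : A, ∀ i ∈ S, a - x i ∉ H i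

lemma coatom_simple' {A : Type*} [AddCommGroup A] {H : AddSubgroup A} (h : IsCoatom H) :
    IsSimpleAddGroup (A ⧸ H) := by
  obtain ⟨hne, hmax⟩ := h
  have hmk : Function.Surjective (QuotientAddGroup.mk' H) := QuotientAddGroup.mk'_surjective H
  have hnt : Nontrivial (A ⧸ H) := by
    obtain ⟨y, hy⟩ : ∃ y, y ∉ H := by
      by_contra hc; push_neg at hc; exact hne ((AddSubgroup.eq_top_iff' _).2 hc)
    exact ⟨QuotientAddGroup.mk y, 0, by
      simpa [QuotientAddGroup.eq_zero_iff] using hy⟩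
  refine ⟨fun K _ => ?_⟩
  set K' := K.comap (QuotientAddGroup.mk' H) with hK'
  have hHK : H ≤ K' := fun z hz => by
    simp [hK', AddSubgroup.mem_comap, (QuotientAddGroup.eq_zero_iff z).2 hz, K.zero_mem]
  have hback : K = K'.map (QuotientAddGroup.mk' H) :=
    (AddSubgroup.map_comap_eq_self_of_surjective hmk K).symm
  rcases eq_or_lt_of_le hHK with he | hlt
  · left
    rw [hback, ← he]
    refine le_bot_iff.1 fun q hq => ?_
    obtain ⟨z, hz, rfl⟩ := hq
    simpa [QuotientAddGroup.eq_zero_iff] using hz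
  · right
    rw [hback, hmax _ hlt]
    simpa using AddSubgroup.map_top_of_surjective _ hmk

lemma coatom_prime_smul' {A : Type*} [AddCommGroup A] [Finite A] {H : AddSubgroup A}
    (h : IsCoatom H) : ∃ p : ℕ, p.Prime ∧ ∀ y : A, p • y ∈ H := by
  haveI := coatom_simple' h
  refine ⟨Nat.card (A ⧸ H), IsSimpleAddGroup.prime_card, fun y => ?_⟩
  have : (Nat.card (A ⧸ H)) • (QuotientAddGroup.mk y : A ⧸ H) = 0 := card_nsmul_eq_zero'
  rwa [← QuotientAddGroup.mk_nsmul, QuotientAddGroup.eq_zero_iff] at this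

theorem stmt_17 (A : Type) [AddCommGroup A] [Fintype A] (k : ℕ)
    (H : Fin k → AddSubgroup A) (x : Fin k → A)
    (hcov : IsIrredundantCosetCover H x)
    (hbot : (⨅ i : Fin k, H i) = ⊥)
    (hmax : ∀ i : Fin k, IsCoatom (H i)) :
    ∃ (p n : ℕ), p.Prime ∧ 1 ≤ n ∧ Nonempty (A ≃+ (Fin n → ZMod p)) := by
  classical
  -- choose primes
  choose pf hpf hsmul using fun i => coatom_prime_smul' (hmax i)
  -- k is positive
  obtain ⟨i0, -⟩ := hcov.1 0
  set p := pf i0 with hp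
  -- all primes are equal
  have hall : ∀ i, pf i = p := by
    by_contra hc
    push_neg at hc
    obtain ⟨j, hj⟩ := hc
    set S : Finset (Fin k) := Finset.univ.filter (fun i => pf i = p) with hS
    have hSne : S ≠ Finset.univ := by
      intro h
      apply hj
      have hjS : j ∈ S := h.symm ▸ Finset.mem_univ j
      exact (Finset.mem_filter.1 hjS).2
    have hTne : Sᶜ ≠ Finset.univ := fun h => by
      have : i0 ∈ Sᶜ := h.symm ▸ Finset.mem_univ i0
      simp [hS, Finset.mem_compl, hp] at this
    obtain ⟨a, ha⟩ := hcov.2 S hSne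
    obtain ⟨b, hb⟩ := hcov.2 Sᶜ hTne
    set M : ℕ := ∏ j ∈ Sᶜ, pf j with hM
    have hcop : Nat.Coprime p M := by
      refine Nat.Coprime.prod_right fun j hjT => ?_
      have hne : p ≠ pf j := by
        intro h
        simp [hS, Finset.mem_compl, h.symm] at hjT
      exact (Nat.coprime_primes (hp ▸ hpf i0) (hpf j)).2 hne
    obtain ⟨s, t, hst⟩ := (Nat.isCoprime_iff_coprime.2 hcop)
    -- hst : s * p + t * M = 1
    set c : A := a + (s * (p : ℤ)) • (b - a) with hc'
    have hca : ∀ i ∈ S, c - x i ∉ H i := by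
      intro i hi hmem
      have hpi : pf i = p := (Finset.mem_filter.1 hi).2
      have h1 : c - a ∈ H i := by
        have : ((p : ℤ)) • (b - a) ∈ H i := by
          have := hsmul i (b - a)
          rw [hpi] at this
          simpa [natCast_zsmul] using this
        have : (s * (p : ℤ)) • (b - a) ∈ H i := by
          rw [mul_zsmul]
          exact AddSubgroup.zsmul_mem _ this s
        simpa [hc'] using this
      exact ha i hi (by simpa using AddSubgroup.sub_mem _ hmem h1)
    have hcb : ∀ i ∈ Sᶜ, c - x i ∉ H i := by
      intro i hi hmem
      have hdvd : pf i ∣ M := Finset.dvd_prod_of_mem pf hi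
      have h1 : c - b ∈ H i := by
        have hMmem : ((M : ℤ)) • (a - b) ∈ H i := by
          obtain ⟨d, hd⟩ := hdvd
          have := hsmul i (a - b)
          rw [hd]
          rw [show ((pf i * d : ℕ) : ℤ) = (d : ℤ) * (pf i : ℤ) by push_cast; ring, mul_zsmul]
          exact AddSubgroup.zsmul_mem _ (by simpa [natCast_zsmul] using this) d
        have hcb' : c - b = (t * (M : ℤ)) • (a - b) := by
          have h2 : t * (M : ℤ) = 1 - s * (p : ℤ) := by linarith
          rw [hc', h2]
          module
        rw [hcb', mul_zsmul]
        exact AddSubgroup.zsmul_mem _ hMmem t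
      exact hb i hi (by simpa using AddSubgroup.sub_mem _ hmem h1)
    obtain ⟨i, hi⟩ := hcov.1 c
    by_cases h : i ∈ S
    · exact hca i h hi
    · exact hcb i (Finset.mem_compl.2 h) hi
  -- now p • y = 0 for all y
  have hp0 : ∀ y : A, p • y = 0 := by
    intro y
    have : p • y ∈ ⨅ i : Fin k, H i := by
      refine AddSubgroup.mem_iInf.2 fun i => ?_
      have := hsmul i y
      rwa [hall i] at this
    rw [hbot] at this
    simpa using this
  have hpp : p.Prime := hp ▸ hpf i0
  haveI : Fact p.Prime := ⟨hpp⟩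
  letI : Module (ZMod p) A := AddCommGroup.zmodModule hp0
  haveI hfinA : Module.Finite (ZMod p) A := Module.Finite.of_finite
  haveI : Nontrivial A := by
    obtain ⟨y, hy⟩ : ∃ y, y ∉ H i0 := by
      by_contra hcc; push_neg at hcc
      exact (hmax i0).1 ((AddSubgroup.eq_top_iff' _).2 hcc)
    exact ⟨y, 0, fun h => hy (h ▸ (H i0).zero_mem)⟩
  refine ⟨p, Module.finrank (ZMod p) A, hpp, ?_, ?_⟩
  · haveI hnzd : NoZeroSMulDivisors (ZMod p) A := by
      refine ⟨fun {c x} h => ?_⟩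
      rcases eq_or_ne c 0 with hc | hc
      · exact Or.inl hc
      · refine Or.inr ?_
        have h2 := congrArg (fun y => c⁻¹ • y) h
        simpa [smul_smul, inv_mul_cancel₀ hc] using h2
    exact (@Module.finrank_pos_iff (ZMod p) A _ _ _ _ hfinA _ DivisionSemiring.to_moduleIsTorsionFree).2 inferInstance
  · haveI hfree : Module.Free (ZMod p) A := Module.Free.of_divisionRing (ZMod p) A
    exact ⟨((@Module.finBasis (ZMod p) A _ _ _ hfree _ hfinA).equivFun).toAddEquiv⟩
end

section
/- Let A be a finite additive abelian group and let p be a prime dividing Nat.card A. If (H i, x i)_{i ∈ Fin k} is an irredundant coset cover of A with ⨅_{i ∈ Fin k} H i = ⊥, then k ≥ p. -/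
theorem stmt_19 (A : Type) [AddCommGroup A] [Fintype A] (p : ℕ) (hp : p.Prime)
    (hdvd : p ∣ Nat.card A) (k : ℕ) (H : Fin k → AddSubgroup A) (x : Fin k → A)
    (hcov : IsIrredundantCosetCover H x)
    (hbot : (⨅ i : Fin k, H i) = ⊥) : p ≤ k := by
  classical
  haveI : Fact p.Prime := ⟨hp⟩
  set N := Fintype.card A with hN
  -- the `p`-primary subgroup of `A`
  set P : AddSubgroup A := AddMonoidHom.ker ((p ^ N) • AddMonoidHom.id A) with hPdef
  have hmemP : ∀ a : A, a ∈ P ↔ (p ^ N) • a = 0 := by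
    intro a
    simp [hPdef, AddMonoidHom.mem_ker]
  have hNpos : 0 < N := Fintype.card_pos
  -- Cauchy: an element of order p, lying in P
  obtain ⟨a₀, ha₀⟩ := exists_prime_addOrderOf_dvd_card (G := A) p
    (by rwa [← Nat.card_eq_fintype_card])
  have ha₀P : a₀ ∈ P := by
    rw [hmemP]
    have : addOrderOf a₀ ∣ p ^ N := by
      rw [ha₀]; exact dvd_pow_self p hNpos.ne'
    exact addOrderOf_dvd_iff_nsmul_eq_zero.mp this
  have hpP : p ∣ Nat.card P := by
    have : addOrderOf (⟨a₀, ha₀P⟩ : P) = p := by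
      rw [AddSubgroup.addOrderOf_mk, ha₀]
    rw [Nat.card_eq_fintype_card]
    have h2 : addOrderOf (⟨a₀, ha₀P⟩ : P) ∣ Fintype.card P := addOrderOf_dvd_card
    rwa [this] at h2
  have hPpos : 0 < Nat.card P := Nat.card_pos
  -- Nat.card P is a power of p
  obtain ⟨m, hm⟩ : ∃ m, Nat.card P = p ^ m := by
    refine ⟨(Nat.card P).primeFactorsList.length,
      Nat.eq_prime_pow_of_unique_prime_dvd hPpos.ne' ?_⟩
    intro q hq hqd
    haveI : Fact q.Prime := ⟨hq⟩
    obtain ⟨b, hb⟩ := exists_prime_addOrderOf_dvd_card (G := P) q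
      (by rwa [← Nat.card_eq_fintype_card])
    have hb2 : addOrderOf b ∣ p ^ N := by
      apply addOrderOf_dvd_iff_nsmul_eq_zero.mpr
      have := b.2
      rw [hmemP] at this
      exact Subtype.ext (by simp [this])
    rw [hb] at hb2
    exact (Nat.prime_dvd_prime_iff_eq hq hp).mp (hq.dvd_of_dvd_pow hb2)
  -- the set of indices whose subgroup contains P
  set T : Finset (Fin k) := Finset.univ.filter (fun i => P ≤ H i) with hTdef
  have hT : T ≠ Finset.univ := by
    intro hT
    have hle : P ≤ ⨅ i, H i := by
      refine le_iInf fun i => ?_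
      have : i ∈ T := hT ▸ Finset.mem_univ i
      exact (Finset.mem_filter.mp this).2
    rw [hbot, le_bot_iff] at hle
    rw [hle] at hpP
    simp only [AddSubgroup.card_bot] at hpP
    exact hp.one_lt.ne' (Nat.dvd_one.mp hpP)
  obtain ⟨a, ha⟩ := hcov.2 T hT
  -- coset finsets
  set C : A → AddSubgroup A → Finset A :=
    fun y K => Finset.univ.filter (fun c => c - y ∈ K) with hCdef
  have hCmem : ∀ y K c, c ∈ C y K ↔ c - y ∈ K := by
    intro y K c; simp [hCdef]
  have hcardC : ∀ (y : A) (K : AddSubgroup A), (C y K).card = Nat.card K := by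
    intro y K
    have himg : C y K = Finset.univ.image (fun h : K => y + (h : A)) := by
      ext c
      simp only [hCmem, Finset.mem_image, Finset.mem_univ, true_and]
      constructor
      · intro h
        exact ⟨⟨c - y, h⟩, by simp⟩
      · rintro ⟨h, rfl⟩
        simpa using h.2
    rw [himg, Finset.card_image_of_injective _ (fun h₁ h₂ hh => by
      exact Subtype.ext (by simpa using hh)), Finset.card_univ,
      Nat.card_eq_fintype_card]
  -- the coset a + P is covered by cosets with index outside T
  have hsub1 : C a P ⊆ (Finset.univ \ T).biUnion
      (fun i => C a P ∩ C (x i) (H i)) := by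
    intro c hc
    obtain ⟨i, hi⟩ := hcov.1 c
    have hiT : i ∉ T := by
      intro hiT
      have hPH : P ≤ H i := (Finset.mem_filter.mp hiT).2
      have hcP : c - a ∈ P := (hCmem _ _ _).mp hc
      have : a - x i ∈ H i := by
        have := (H i).sub_mem hi (hPH hcP)
        simpa [sub_sub_sub_cancel_left] using this
      exact ha i hiT this
    exact Finset.mem_biUnion.mpr ⟨i, by simp [hiT],
      Finset.mem_inter.mpr ⟨hc, (hCmem _ _ _).mpr hi⟩⟩
  -- each piece is small
  have hstep : ∀ i ∈ Finset.univ \ T,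
      (C a P ∩ C (x i) (H i)).card * p ≤ Nat.card P := by
    intro i hiT'
    have hiT : i ∉ T := (Finset.mem_sdiff.mp hiT').2
    rcases (C a P ∩ C (x i) (H i)).eq_empty_or_nonempty with he | ⟨b, hb⟩
    · simp [he, hPpos.le]
    · have hbP : b - a ∈ P := (hCmem _ _ _).mp (Finset.mem_inter.mp hb).1
      have hbH : b - x i ∈ H i := (hCmem _ _ _).mp (Finset.mem_inter.mp hb).2
      have hsub : C a P ∩ C (x i) (H i) ⊆ C b ((H i) ⊓ P) := by
        intro c hc
        have hcP : c - a ∈ P := (hCmem _ _ _).mp (Finset.mem_inter.mp hc).1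
        have hcH : c - x i ∈ H i := (hCmem _ _ _).mp (Finset.mem_inter.mp hc).2
        refine (hCmem _ _ _).mpr ⟨?_, ?_⟩
        · have := (H i).sub_mem hcH hbH
          simpa [sub_sub_sub_cancel_right] using this
        · have := P.sub_mem hcP hbP
          simpa [sub_sub_sub_cancel_right] using this
      have h1 : (C a P ∩ C (x i) (H i)).card ≤
          Nat.card ((H i) ⊓ P : AddSubgroup A) := by
        rw [← hcardC b ((H i) ⊓ P)]
        exact Finset.card_le_card hsub
      have hdvd2 : Nat.card ((H i) ⊓ P : AddSubgroup A) ∣ Nat.card P :=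
        AddSubgroup.card_dvd_of_le inf_le_right
      have hne : Nat.card ((H i) ⊓ P : AddSubgroup A) ≠ Nat.card P := by
        intro heq
        have heqP : ((H i) ⊓ P : AddSubgroup A) = P :=
          AddSubgroup.eq_of_le_of_card_ge inf_le_right heq.ge
        have hPH : P ≤ H i := by
          rw [← heqP]; exact inf_le_left
        exact hiT (Finset.mem_filter.mpr ⟨Finset.mem_univ _, hPH⟩)
      obtain ⟨j, hjle, hj⟩ := (Nat.dvd_prime_pow hp).mp (hm ▸ hdvd2)
      have hjlt : j < m := by
        refine lt_of_le_of_ne hjle fun hjm => hne ?_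
        rw [hj, hjm, hm]
      calc (C a P ∩ C (x i) (H i)).card * p ≤ p ^ j * p :=
            Nat.mul_le_mul_right p (h1.trans_eq hj)
        _ = p ^ (j + 1) := (pow_succ p j).symm
        _ ≤ p ^ m := Nat.pow_le_pow_right hp.pos hjlt
        _ = Nat.card P := hm.symm
  -- put it together
  have hfinal : Nat.card P * p ≤ (Finset.univ \ T).card * Nat.card P := by
    calc Nat.card P * p = (C a P).card * p := by rw [hcardC]
      _ ≤ ((Finset.univ \ T).biUnion
            (fun i => C a P ∩ C (x i) (H i))).card * p :=
          Nat.mul_le_mul_right p (Finset.card_le_card hsub1)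
      _ ≤ (∑ i ∈ Finset.univ \ T, (C a P ∩ C (x i) (H i)).card) * p :=
          Nat.mul_le_mul_right p (Finset.card_biUnion_le)
      _ = ∑ i ∈ Finset.univ \ T, (C a P ∩ C (x i) (H i)).card * p :=
          Finset.sum_mul _ _ _
      _ ≤ ∑ _i ∈ Finset.univ \ T, Nat.card P := Finset.sum_le_sum hstep
      _ = (Finset.univ \ T).card * Nat.card P := by
          rw [Finset.sum_const, smul_eq_mul]
  have hple : p ≤ (Finset.univ \ T).card := by
    have := hfinal
    rw [mul_comm ((Finset.univ \ T).card) (Nat.card ↥P), mul_comm (Nat.card ↥P) p,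
      mul_comm p (Nat.card ↥P)] at this
    exact Nat.le_of_mul_le_mul_left this hPpos
  calc p ≤ (Finset.univ \ T).card := hple
    _ ≤ Finset.univ.card := Finset.card_le_univ _
    _ = k := by simp
end
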